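/- Let {Y_γ : γ ∈ Γ}, {Z_γ : γ ∈ Γ} be two families of integrable random variables and suppose there is a constant c ≥ 0 and an integrable random variable D ≥ 0 such that |Y_γ − E[Z_γ | G]| ≤ D a.s. for all γ ∈ Γ, for a sub-σ-algebra G. If moreover both families are directed upward and sup_γ(|Y_γ| + |Z_γ|) is integrable, then |ess sup_γ Y_γ − E[ess sup_γ Z_γ | G]| ≤ D a.s. -/

import Mathlib

open MeasureTheory Filter Topology

lemma stmt13_seq
    {Ω : Type*} {m0 : MeasurableSpace Ω} (μ : Measure Ω) [IsProbabilityMeasure μ]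
    {Γ : Type*} [Nonempty Γ] (Z : Γ → Ω → ℝ)
    (hZint : ∀ γ, Integrable (Z γ) μ)
    (hZdir : ∀ γ₁ γ₂ : Γ, ∃ γ₃ : Γ, ∀ᵐ ω ∂μ, max (Z γ₁ ω) (Z γ₂ ω) ≤ Z γ₃ ω)
    (SZ : Ω → ℝ)
    (hSZ_ub : ∀ γ, ∀ᵐ ω ∂μ, Z γ ω ≤ SZ ω)
    (hSZ_lub : ∀ S' : Ω → ℝ, (∀ γ, ∀ᵐ ω ∂μ, Z γ ω ≤ S' ω) → ∀ᵐ ω ∂μ, SZ ω ≤ S' ω)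
    (hSZint : Integrable SZ μ) :
    ∃ δ : ℕ → Γ, (∀ᵐ ω ∂μ, Monotone fun n => Z (δ n) ω) ∧
      (∀ᵐ ω ∂μ, Tendsto (fun n => Z (δ n) ω) atTop (𝓝 (SZ ω))) := by
  classical
  set L : ℝ := ⨆ γ, ∫ ω, Z γ ω ∂μ with hLdef
  have hbdd : BddAbove (Set.range fun γ => ∫ ω, Z γ ω ∂μ) := by
    refine ⟨∫ ω, SZ ω ∂μ, ?_⟩
    rintro _ ⟨γ, rfl⟩
    exact integral_mono_ae (hZint γ) hSZint (hSZ_ub γ)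
  have hL : ∀ γ, ∫ ω, Z γ ω ∂μ ≤ L := fun γ => le_ciSup hbdd γ
  have hα : ∀ n : ℕ, ∃ γ, L - 1 / (n + 1) < ∫ ω, Z γ ω ∂μ := by
    intro n
    refine exists_lt_of_lt_ciSup ?_
    have : (0 : ℝ) < 1 / (n + 1) := by positivity
    linarith
  choose α hαlt using hα
  choose g hg using hZdir
  let δ : ℕ → Γ := fun n => Nat.rec (α 0) (fun n d => g d (α (n + 1))) n
  have hδsucc : ∀ n, δ (n + 1) = g (δ n) (α (n + 1)) := fun n => rfl
  have hstep : ∀ n, ∀ᵐ ω ∂μ, Z (δ n) ω ≤ Z (δ (n + 1)) ω := by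
    intro n
    filter_upwards [hg (δ n) (α (n + 1))] with ω h
    exact (le_max_left _ _).trans h
  have hαδ : ∀ n, ∀ᵐ ω ∂μ, Z (α (n + 1)) ω ≤ Z (δ (n + 1)) ω := by
    intro n
    filter_upwards [hg (δ n) (α (n + 1))] with ω h
    exact (le_max_right _ _).trans h
  have hδint : ∀ n, L - 1 / (n + 1) ≤ ∫ ω, Z (δ n) ω ∂μ := by
    intro n
    cases n with
    | zero => exact (hαlt 0).le
    | succ n =>
      exact le_trans (hαlt (n + 1)).le
        (integral_mono_ae (hZint _) (hZint _) (hαδ n))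
  have hmono : ∀ᵐ ω ∂μ, Monotone fun n => Z (δ n) ω := by
    have := ae_all_iff.2 hstep
    filter_upwards [this] with ω h
    exact monotone_nat_of_le_succ h
  have hub : ∀ᵐ ω ∂μ, ∀ n, Z (δ n) ω ≤ SZ ω := ae_all_iff.2 fun n => hSZ_ub (δ n)
  set Zh : Ω → ℝ := fun ω => ⨆ n, Z (δ n) ω with hZhdef
  have htend : ∀ᵐ ω ∂μ, Tendsto (fun n => Z (δ n) ω) atTop (𝓝 (Zh ω)) := by
    filter_upwards [hmono, hub] with ω hm hu
    exact tendsto_atTop_ciSup hm ⟨SZ ω, by rintro _ ⟨n, rfl⟩; exact hu n⟩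
  have hZhmeas : AEStronglyMeasurable Zh μ :=
    aestronglyMeasurable_of_tendsto_ae atTop (fun n => (hZint (δ n)).1) htend
  have hZhle : ∀ᵐ ω ∂μ, Zh ω ≤ SZ ω := by
    filter_upwards [hub] with ω hu
    exact ciSup_le hu
  have hZhge : ∀ᵐ ω ∂μ, Z (δ 0) ω ≤ Zh ω := by
    filter_upwards [hmono, hub] with ω hm hu
    exact le_ciSup ⟨SZ ω, by rintro _ ⟨n, rfl⟩; exact hu n⟩ 0
  have hZhint : Integrable Zh μ := by
    refine Integrable.mono' ((hZint (δ 0)).abs.add hSZint.abs) hZhmeas ?_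
    filter_upwards [hZhle, hZhge] with ω h1 h2
    rw [Real.norm_eq_abs, abs_le]
    constructor
    · calc -(|Z (δ 0) ω| + |SZ ω|) ≤ -|Z (δ 0) ω| := by
            have := abs_nonneg (SZ ω); linarith
        _ ≤ Z (δ 0) ω := neg_abs_le _
        _ ≤ Zh ω := h2
    · calc Zh ω ≤ SZ ω := h1
        _ ≤ |SZ ω| := le_abs_self _
        _ ≤ |Z (δ 0) ω| + |SZ ω| := by have := abs_nonneg (Z (δ 0) ω); linarith
  have hint_tendsto : Tendsto (fun n => ∫ ω, Z (δ n) ω ∂μ) atTop (𝓝 (∫ ω, Zh ω ∂μ)) :=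
    integral_tendsto_of_tendsto_of_monotone (fun n => hZint (δ n)) hZhint hmono htend
  have hintL : Tendsto (fun n => ∫ ω, Z (δ n) ω ∂μ) atTop (𝓝 L) := by
    have h1 : Tendsto (fun n : ℕ => L - 1 / (n + 1 : ℝ)) atTop (𝓝 (L - 0)) :=
      tendsto_const_nhds.sub tendsto_one_div_add_atTop_nhds_zero_nat
    rw [sub_zero] at h1
    exact tendsto_of_tendsto_of_tendsto_of_le_of_le h1 tendsto_const_nhds
      (fun n => hδint n) (fun n => hL (δ n))
  have hZhL : ∫ ω, Zh ω ∂μ = L := tendsto_nhds_unique hint_tendsto hintL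
  -- Zh is an essential upper bound for the family
  have hubZh : ∀ γ, ∀ᵐ ω ∂μ, Z γ ω ≤ Zh ω := by
    intro γ
    set W : ℕ → Ω → ℝ := fun n ω => max (Z γ ω) (Z (δ n) ω) with hWdef
    have hWint : ∀ n, Integrable (W n) μ := fun n => (hZint γ).sup (hZint (δ n))
    have hWle : ∀ n, ∫ ω, W n ω ∂μ ≤ L := by
      intro n
      exact le_trans (integral_mono_ae (hWint n) (hZint _) (hg γ (δ n))) (hL _)
    have hWmono : ∀ᵐ ω ∂μ, Monotone fun n => W n ω := by
      filter_upwards [hmono] with ω hm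
      exact fun i j hij => max_le_max le_rfl (hm hij)
    have hM : Integrable (fun ω => max (Z γ ω) (Zh ω)) μ := (hZint γ).sup hZhint
    have hWtend : ∀ᵐ ω ∂μ, Tendsto (fun n => W n ω) atTop (𝓝 (max (Z γ ω) (Zh ω))) := by
      filter_upwards [htend] with ω ht
      exact tendsto_const_nhds.max ht
    have hWlim : Tendsto (fun n => ∫ ω, W n ω ∂μ) atTop (𝓝 (∫ ω, max (Z γ ω) (Zh ω) ∂μ)) :=
      integral_tendsto_of_tendsto_of_monotone hWint hM hWmono hWtend
    have hMle : ∫ ω, max (Z γ ω) (Zh ω) ∂μ ≤ L :=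
      le_of_tendsto hWlim (Filter.Eventually.of_forall hWle)
    have hdiff_nonneg : 0 ≤ᵐ[μ] fun ω => max (Z γ ω) (Zh ω) - Zh ω :=
      Filter.Eventually.of_forall fun ω => by simp [le_max_right]
    have hdiff_int : Integrable (fun ω => max (Z γ ω) (Zh ω) - Zh ω) μ := hM.sub hZhint
    have hdiff_zero : ∫ ω, (max (Z γ ω) (Zh ω) - Zh ω) ∂μ = 0 := by
      have h1 : ∫ ω, (max (Z γ ω) (Zh ω) - Zh ω) ∂μ ≤ 0 := by
        rw [integral_sub hM hZhint, hZhL]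
        linarith
      have h2 : 0 ≤ ∫ ω, (max (Z γ ω) (Zh ω) - Zh ω) ∂μ :=
        integral_nonneg_of_ae hdiff_nonneg
      linarith
    have := (integral_eq_zero_iff_of_nonneg_ae hdiff_nonneg hdiff_int).1 hdiff_zero
    filter_upwards [this] with ω h
    have : max (Z γ ω) (Zh ω) - Zh ω = 0 := h
    have hmax : max (Z γ ω) (Zh ω) = Zh ω := by linarith
    calc Z γ ω ≤ max (Z γ ω) (Zh ω) := le_max_left _ _
      _ = Zh ω := hmax
  have hSZZh : ∀ᵐ ω ∂μ, SZ ω ≤ Zh ω := hSZ_lub Zh hubZh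
  refine ⟨δ, hmono, ?_⟩
  filter_upwards [htend, hSZZh, hZhle] with ω ht h1 h2
  have : SZ ω = Zh ω := le_antisymm h1 h2
  rw [this]
  exact ht
/-- An a.s. bound `|Y_γ - E[Z_γ | G]| ≤ D` uniform over a directed family passes to the
essential suprema: `|ess sup Y - E[ess sup Z | G]| ≤ D` a.s. -/
theorem stmt13 {Ω : Type*} {m0 : MeasurableSpace Ω} (μ : Measure Ω)
    [IsProbabilityMeasure μ] (G : MeasurableSpace Ω) (hG : G ≤ m0)
    {Γ : Type*} [Nonempty Γ]
    (Y Z : Γ → Ω → ℝ)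
    (hYint : ∀ γ, Integrable (Y γ) μ) (hZint : ∀ γ, Integrable (Z γ) μ)
    (hYmeas : ∀ γ, StronglyMeasurable[G] (Y γ))
    (D : Ω → ℝ) (hD_nonneg : 0 ≤ᵐ[μ] D) (hD_meas : StronglyMeasurable[G] D)
    (hD_int : Integrable D μ)
    (hbound : ∀ γ, ∀ᵐ ω ∂μ, |Y γ ω - (μ[Z γ | G]) ω| ≤ D ω)
    (hYdir : ∀ γ₁ γ₂ : Γ, ∃ γ₃ : Γ, ∀ᵐ ω ∂μ, max (Y γ₁ ω) (Y γ₂ ω) ≤ Y γ₃ ω)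
    (hZdir : ∀ γ₁ γ₂ : Γ, ∃ γ₃ : Γ, ∀ᵐ ω ∂μ, max (Z γ₁ ω) (Z γ₂ ω) ≤ Z γ₃ ω)
    (henv : Integrable (fun ω => ⨆ γ, (|Y γ ω| + |Z γ ω|)) μ)
    (SY SZ : Ω → ℝ)
    (hSY_ub : ∀ γ, ∀ᵐ ω ∂μ, Y γ ω ≤ SY ω)
    (hSY_lub : ∀ S' : Ω → ℝ, (∀ γ, ∀ᵐ ω ∂μ, Y γ ω ≤ S' ω) → ∀ᵐ ω ∂μ, SY ω ≤ S' ω)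
    (hSZ_ub : ∀ γ, ∀ᵐ ω ∂μ, Z γ ω ≤ SZ ω)
    (hSZ_lub : ∀ S' : Ω → ℝ, (∀ γ, ∀ᵐ ω ∂μ, Z γ ω ≤ S' ω) → ∀ᵐ ω ∂μ, SZ ω ≤ S' ω)
    (hSYint : Integrable SY μ) (hSZint : Integrable SZ μ) :
    ∀ᵐ ω ∂μ, |SY ω - (μ[SZ | G]) ω| ≤ D ω := by
  classical
  haveI : SigmaFinite (μ.trim hG) := by infer_instance
  -- Upper bound: SY ≤ μ[SZ|G] + D a.e.
  have hupper : ∀ᵐ ω ∂μ, SY ω ≤ (μ[SZ | G]) ω + D ω := by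
    refine hSY_lub _ fun γ => ?_
    filter_upwards [hbound γ, condExp_mono (hZint γ) hSZint (hSZ_ub γ)] with ω h1 h2
    have := (abs_le.1 h1).2
    linarith
  -- Lower bound: μ[SZ|G] ≤ SY + D a.e.
  obtain ⟨δ, hmono, htend⟩ := stmt13_seq μ Z hZint hZdir SZ hSZ_ub hSZ_lub hSZint
  set gs : ℕ → Ω → ℝ := fun n => μ[Z (δ n) | G] with hgsdef
  have hgsint : ∀ n, Integrable (gs n) μ := fun n => integrable_condExp
  have hgsmono : ∀ᵐ ω ∂μ, Monotone fun n => gs n ω := by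
    have hstep : ∀ n : ℕ, ∀ᵐ ω ∂μ, gs n ω ≤ gs (n + 1) ω := by
      intro n
      exact condExp_mono (hZint _) (hZint _)
        (hmono.mono fun ω h => h (Nat.le_succ n))
    filter_upwards [ae_all_iff.2 hstep] with ω h
    exact monotone_nat_of_le_succ h
  have hgsP : ∀ᵐ ω ∂μ, ∀ n, gs n ω ≤ (μ[SZ | G]) ω :=
    ae_all_iff.2 fun n => condExp_mono (hZint _) hSZint (hSZ_ub _)
  have hgsD : ∀ᵐ ω ∂μ, ∀ n, gs n ω ≤ SY ω + D ω := by
    refine ae_all_iff.2 fun n => ?_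
    filter_upwards [hbound (δ n), hSY_ub (δ n)] with ω h1 h2
    have := (abs_le.1 h1).1
    linarith
  set gh : Ω → ℝ := fun ω => ⨆ n, gs n ω with hghdef
  have hghtend : ∀ᵐ ω ∂μ, Tendsto (fun n => gs n ω) atTop (𝓝 (gh ω)) := by
    filter_upwards [hgsmono, hgsP] with ω hm hu
    exact tendsto_atTop_ciSup hm ⟨(μ[SZ | G]) ω, by rintro _ ⟨n, rfl⟩; exact hu n⟩
  have hghmeas : AEStronglyMeasurable[m0] gh μ :=
    aestronglyMeasurable_of_tendsto_ae atTop (fun n => (hgsint n).1) hghtend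
  have hghle : ∀ᵐ ω ∂μ, gh ω ≤ (μ[SZ | G]) ω := by
    filter_upwards [hgsP] with ω hu
    exact ciSup_le hu
  have hghge : ∀ᵐ ω ∂μ, gs 0 ω ≤ gh ω := by
    filter_upwards [hgsP] with ω hu
    exact le_ciSup ⟨(μ[SZ | G]) ω, by rintro _ ⟨n, rfl⟩; exact hu n⟩ 0
  have hghint : Integrable gh μ := by
    refine Integrable.mono' ((hgsint 0).abs.add (integrable_condExp (f := SZ) (m := G)).abs) hghmeas ?_
    filter_upwards [hghle, hghge] with ω h1 h2
    rw [Real.norm_eq_abs, abs_le]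
    constructor
    · calc -(|gs 0 ω| + |(μ[SZ | G]) ω|) ≤ -|gs 0 ω| := by
            have := abs_nonneg ((μ[SZ | G]) ω); linarith
        _ ≤ gs 0 ω := neg_abs_le _
        _ ≤ gh ω := h2
    · calc gh ω ≤ (μ[SZ | G]) ω := h1
        _ ≤ |(μ[SZ | G]) ω| := le_abs_self _
        _ ≤ |gs 0 ω| + |(μ[SZ | G]) ω| := by have := abs_nonneg (gs 0 ω); linarith
  -- integrals converge
  have hZtendint : Tendsto (fun n => ∫ ω, Z (δ n) ω ∂μ) atTop (𝓝 (∫ ω, SZ ω ∂μ)) :=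
    integral_tendsto_of_tendsto_of_monotone (fun n => hZint (δ n)) hSZint hmono htend
  have hgs_int_eq : ∀ n, ∫ ω, gs n ω ∂μ = ∫ ω, Z (δ n) ω ∂μ := fun n =>
    integral_condExp hG
  have hghtendint : Tendsto (fun n => ∫ ω, gs n ω ∂μ) atTop (𝓝 (∫ ω, gh ω ∂μ)) :=
    integral_tendsto_of_tendsto_of_monotone hgsint hghint hgsmono hghtend
  have hgh_int_eq : ∫ ω, gh ω ∂μ = ∫ ω, (μ[SZ | G]) ω ∂μ := by
    rw [integral_condExp hG]
    refine tendsto_nhds_unique hghtendint ?_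
    simpa only [hgs_int_eq] using hZtendint
  -- gh = μ[SZ|G] a.e.
  have hgh_eq : ∀ᵐ ω ∂μ, (μ[SZ | G]) ω = gh ω := by
    have hdiff_nonneg : 0 ≤ᵐ[μ] fun ω => (μ[SZ | G]) ω - gh ω := by
      filter_upwards [hghle] with ω h
      simp only [Pi.zero_apply]
      linarith
    have hdiff_int : Integrable (fun ω => (μ[SZ | G]) ω - gh ω) μ :=
      integrable_condExp.sub hghint
    have hzero : ∫ ω, ((μ[SZ | G]) ω - gh ω) ∂μ = 0 := by
      rw [integral_sub integrable_condExp hghint, hgh_int_eq, sub_self]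
    have := (integral_eq_zero_iff_of_nonneg_ae hdiff_nonneg hdiff_int).1 hzero
    filter_upwards [this] with ω h
    have : (μ[SZ | G]) ω - gh ω = 0 := h
    linarith
  have hlower : ∀ᵐ ω ∂μ, (μ[SZ | G]) ω ≤ SY ω + D ω := by
    filter_upwards [hgh_eq, hgsD] with ω heq hD
    rw [heq]
    exact ciSup_le hD
  filter_upwards [hupper, hlower] with ω h1 h2
  rw [abs_le]
  constructor <;> linarith
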